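/- Let D₁ and D₂ be nonnegative identically distributed real-valued random variables on a common probability space with common survival function S(x) := P(D₁ > x), satisfying S(x) > 0 for all x. Assume S is regularly varying at infinity with tail index α > 1, i.e. for every x > 0, S(sx)/S(s) → x^{−α} as s → ∞, and assume the joint tail is negligible relative to the marginal tail: P(D₁ > x, D₂ > x)/S(x) → 0 as x → ∞. Then there exists a threshold t₀ ∈ (0,1) such that for all t ∈ [t₀, 1), F_{D₁+D₂}⁻¹(t) < F_{D₁}⁻¹(t) + F_{D₂}⁻¹(t); that is, the pooling effect is negative for all margin ratios at or above t₀. -/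

import Mathlib

open MeasureTheory ProbabilityTheory Set Filter Topology

/-- The quantile function of a distribution on `ℝ`: `F⁻¹(t) = inf {x | t ≤ F(x)}`. -/
noncomputable def quantile (μ : Measure ℝ) (t : ℝ) : ℝ :=
  sInf {x : ℝ | t ≤ cdf μ x}

lemma quantile_aux_nonempty (μ : Measure ℝ) {t : ℝ} (ht1 : t < 1) :
    {x : ℝ | t ≤ cdf μ x}.Nonempty :=
  ((tendsto_cdf_atTop μ).eventually (eventually_ge_nhds ht1)).exists

lemma quantile_aux_bddBelow (μ : Measure ℝ) {t : ℝ} (ht0 : 0 < t) :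
    BddBelow {x : ℝ | t ≤ cdf μ x} := by
  obtain ⟨b, hb⟩ := eventually_atBot.mp
    ((tendsto_cdf_atBot μ).eventually (eventually_lt_nhds ht0))
  exact ⟨b, fun a ha => le_of_not_gt fun h => absurd ha (not_le.mpr (hb a h.le))⟩

lemma le_cdf_quantile (μ : Measure ℝ) {t : ℝ} (ht0 : 0 < t) (ht1 : t < 1) :
    t ≤ cdf μ (quantile μ t) := by
  have hne := quantile_aux_nonempty μ ht1
  have hbdd := quantile_aux_bddBelow μ ht0
  have h1 : ∀ x ∈ Ioi (quantile μ t), t ≤ cdf μ x := by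
    intro x hx
    obtain ⟨a, ha, hax⟩ := (csInf_lt_iff hbdd hne).mp hx
    exact le_trans ha ((cdf μ).mono hax.le)
  have h2 : Tendsto (cdf μ) (𝓝[>] (quantile μ t)) (𝓝 (cdf μ (quantile μ t))) :=
    ((cdf μ).right_continuous (quantile μ t)).mono_left
      (nhdsWithin_mono _ Ioi_subset_Ici_self)
  exact ge_of_tendsto h2 (eventually_nhdsWithin_of_forall h1)

/-- For identically distributed nonnegative demands with regularly varying tails of index
`α > 1` and negligible joint tail, the pooling effect is negative for all margin ratios at
or above some threshold `t₀ ∈ (0,1)`. -/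
theorem pooling_effect_neg_of_regularly_varying {Ω : Type*} [MeasurableSpace Ω]
    (P : Measure Ω) [IsProbabilityMeasure P] (D₁ D₂ : Ω → ℝ)
    (hD₁ : Measurable D₁) (hD₂ : Measurable D₂)
    (hnn₁ : ∀ ω, 0 ≤ D₁ ω) (hnn₂ : ∀ ω, 0 ≤ D₂ ω)
    (hid : Measure.map D₁ P = Measure.map D₂ P)
    (S : ℝ → ℝ) (hS : ∀ x, S x = (P {ω | x < D₁ ω}).toReal)
    (hSpos : ∀ x, 0 < S x)
    (α : ℝ) (hα : 1 < α)
    (hreg : ∀ x > (0 : ℝ), Tendsto (fun s => S (s * x) / S s) atTop (𝓝 (x ^ (-α))))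
    (hjoint : Tendsto (fun x => (P {ω | x < D₁ ω ∧ x < D₂ ω}).toReal / S x) atTop (𝓝 0)) :
    ∃ t₀ ∈ Set.Ioo (0 : ℝ) 1, ∀ t ∈ Set.Ico t₀ 1,
      quantile (Measure.map (fun ω => D₁ ω + D₂ ω) P) t <
        quantile (Measure.map D₁ P) t + quantile (Measure.map D₂ P) t := by
  classical
  set μ := Measure.map D₁ P with hμ
  set σ := Measure.map (fun ω => D₁ ω + D₂ ω) P with hσ
  haveI : IsProbabilityMeasure μ := Measure.isProbabilityMeasure_map hD₁.aemeasurable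
  haveI : IsProbabilityMeasure σ := Measure.isProbabilityMeasure_map (hD₁.add hD₂).aemeasurable
  have hα0 : (0 : ℝ) < α := lt_trans one_pos hα
  -- the constants
  set b : ℝ := (2 : ℝ) ^ (1 / α) with hbdef
  have hb1 : (1 : ℝ) < b := Real.one_lt_rpow_iff_of_pos two_pos |>.mpr (Or.inl ⟨one_lt_two, by positivity⟩)
  have hb2 : b < 2 := by
    have h1 : (1 : ℝ) / α < 1 := (div_lt_one hα0).mpr hα
    calc b < 2 ^ (1 : ℝ) := Real.rpow_lt_rpow_of_exponent_lt one_lt_two h1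
    _ = 2 := Real.rpow_one 2
  set c' : ℝ := (b + 2) / 2 with hc'def
  have hc'b : b < c' := by rw [hc'def]; linarith
  have hc'2 : c' < 2 := by rw [hc'def]; linarith
  have hc'pos : (0 : ℝ) < c' := by linarith
  set δ : ℝ := (2 - c') / 2 with hδdef
  have hδpos : (0 : ℝ) < δ := by rw [hδdef]; linarith
  set c : ℝ := c' + δ with hcdef
  have hc2 : c < 2 := by rw [hcdef, hδdef]; linarith
  -- `2 * c' ^ (-α) < 1`
  have hbα : b ^ α = 2 := by
    rw [hbdef, ← Real.rpow_mul (by norm_num : (0:ℝ) ≤ 2)]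
    rw [one_div, inv_mul_cancel₀ (ne_of_gt hα0), Real.rpow_one]
  have hc'α : (2 : ℝ) < c' ^ α := by
    rw [← hbα]
    exact Real.rpow_lt_rpow (by linarith) hc'b hα0
  have hc'αpos : (0 : ℝ) < c' ^ α := Real.rpow_pos_of_pos hc'pos α
  have hL : 2 * c' ^ (-α) < 1 := by
    rw [Real.rpow_neg hc'pos.le]
    have := (div_lt_one hc'αpos).mpr hc'α
    rwa [div_eq_mul_inv] at this
  -- tail identities
  have hSμ : ∀ x, S x = 1 - cdf μ x := by
    intro x
    have hmap : μ (Iic x) = P {ω | D₁ ω ≤ x} := by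
      rw [hμ, Measure.map_apply hD₁ measurableSet_Iic]; rfl
    have hcompl : {ω | x < D₁ ω} = {ω | D₁ ω ≤ x}ᶜ := by ext ω; simp [not_le]
    have hms : MeasurableSet {ω | D₁ ω ≤ x} := hD₁ measurableSet_Iic
    rw [hS x, cdf_eq_real, measureReal_def, hmap, hcompl,
      measure_compl hms (measure_ne_top P _), measure_univ,
      ENNReal.toReal_sub_of_le prob_le_one ENNReal.one_ne_top, ENNReal.toReal_one]
  have hGσ : ∀ y, (P {ω | y < D₁ ω + D₂ ω}).toReal = 1 - cdf σ y := by
    intro y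
    have hmap : σ (Iic y) = P {ω | D₁ ω + D₂ ω ≤ y} := by
      rw [hσ, Measure.map_apply (f := fun ω => D₁ ω + D₂ ω) (hD₁.add hD₂) measurableSet_Iic]; rfl
    have hcompl : {ω | y < D₁ ω + D₂ ω} = {ω | D₁ ω + D₂ ω ≤ y}ᶜ := by ext ω; simp [not_le]
    have hms : MeasurableSet {ω | D₁ ω + D₂ ω ≤ y} := (hD₁.add hD₂) measurableSet_Iic
    rw [cdf_eq_real, measureReal_def, hmap, hcompl,
      measure_compl hms (measure_ne_top P _), measure_univ,
      ENNReal.toReal_sub_of_le prob_le_one ENNReal.one_ne_top, ENNReal.toReal_one]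
  have hSν : ∀ y, (P {ω | y < D₂ ω}).toReal = S y := by
    intro y
    have h1 : P {ω | y < D₂ ω} = Measure.map D₂ P (Ioi y) := by
      rw [Measure.map_apply hD₂ measurableSet_Ioi]; rfl
    have h2 : P {ω | y < D₁ ω} = Measure.map D₁ P (Ioi y) := by
      rw [Measure.map_apply hD₁ measurableSet_Ioi]; rfl
    rw [hS y, h1, h2, ← hμ, hid]
  -- the key eventual tail bound
  have h1 : Tendsto (fun x => S (x * c') / S x) atTop (𝓝 (c' ^ (-α))) := hreg c' hc'pos
  have h2 : Tendsto (fun x => (P {ω | x * δ < D₁ ω ∧ x * δ < D₂ ω}).toReal / S x)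
      atTop (𝓝 0) := by
    have h2a : Tendsto (fun x => (P {ω | x * δ < D₁ ω ∧ x * δ < D₂ ω}).toReal / S (x * δ))
        atTop (𝓝 0) := hjoint.comp (tendsto_id.atTop_mul_const hδpos)
    have h2b := hreg δ hδpos
    have h2c := h2a.mul h2b
    rw [zero_mul] at h2c
    convert h2c using 2 with x
    rw [div_mul_div_cancel₀ (ne_of_gt (hSpos (x * δ)))]
  have hsum : Tendsto
      (fun x => 2 * (S (x * c') / S x) + (P {ω | x * δ < D₁ ω ∧ x * δ < D₂ ω}).toReal / S x)
      atTop (𝓝 (2 * c' ^ (-α) + 0)) := (h1.const_mul 2).add h2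
  have hkey : ∀ᶠ x in atTop, (P {ω | c * x < D₁ ω + D₂ ω}).toReal < S x := by
    filter_upwards [hsum.eventually (eventually_lt_nhds (by rw [add_zero]; exact hL))] with x hx
    set A := {ω | x * c' < D₁ ω}
    set B := {ω | x * c' < D₂ ω}
    set C := {ω | x * δ < D₁ ω ∧ x * δ < D₂ ω}
    have hsub : {ω | c * x < D₁ ω + D₂ ω} ⊆ A ∪ B ∪ C := by
      intro ω hω
      simp only [A, B, C, mem_union, mem_setOf_eq] at hω ⊢
      by_contra h
      push_neg at h
      obtain ⟨⟨hA, hB⟩, hC⟩ := h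
      have hcx : c * x = x * c' + x * δ := by rw [hcdef]; ring
      rcases le_or_gt (D₁ ω) (x * δ) with h1' | h1'
      · linarith
      · have := hC h1'
        linarith
    have hmA : MeasurableSet A := measurableSet_lt measurable_const hD₁
    have hmB : MeasurableSet B := measurableSet_lt measurable_const hD₂
    have hle : P {ω | c * x < D₁ ω + D₂ ω} ≤ P A + P B + P C :=
      le_trans (measure_mono hsub)
        (le_trans (measure_union_le _ _) (add_le_add_left (measure_union_le _ _) _))
    have hfin : P A + P B + P C ≠ ⊤ := by
      exact ENNReal.add_ne_top.mpr ⟨ENNReal.add_ne_top.mpr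
        ⟨measure_ne_top P _, measure_ne_top P _⟩, measure_ne_top P _⟩
    have htoReal : (P {ω | c * x < D₁ ω + D₂ ω}).toReal
        ≤ (P A).toReal + (P B).toReal + (P C).toReal := by
      have := ENNReal.toReal_mono hfin hle
      rwa [ENNReal.toReal_add (ENNReal.add_ne_top.mpr
        ⟨measure_ne_top P _, measure_ne_top P _⟩) (measure_ne_top P _),
        ENNReal.toReal_add (measure_ne_top P _) (measure_ne_top P _)] at this
    have hPA : (P A).toReal = S (x * c') := (hS (x * c')).symm
    have hPB : (P B).toReal = S (x * c') := hSν (x * c')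
    have hratio : 2 * S (x * c') + (P C).toReal < S x := by
      have hSx := hSpos x
      have : (2 * S (x * c') + (P C).toReal) / S x < 1 := by
        have heq : (2 * S (x * c') + (P C).toReal) / S x
            = 2 * (S (x * c') / S x) + (P C).toReal / S x := by
          field_simp
        rw [heq]; exact hx
      exact (div_lt_one hSx).mp this
    calc (P {ω | c * x < D₁ ω + D₂ ω}).toReal
        ≤ (P A).toReal + (P B).toReal + (P C).toReal := htoReal
      _ = 2 * S (x * c') + (P C).toReal := by rw [hPA, hPB]; ring
      _ < S x := hratio
  obtain ⟨x₀, hx₀⟩ := eventually_atTop.mp hkey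
  set x₁ : ℝ := max x₀ 1 with hx₁def
  have hFx₁ : cdf μ x₁ < 1 := by
    have h := hSpos x₁
    rw [hSμ x₁] at h
    linarith
  have hF0 : 0 ≤ cdf μ x₁ := cdf_nonneg μ x₁
  refine ⟨(1 + cdf μ x₁) / 2, ⟨by linarith, by linarith⟩, ?_⟩
  rintro t ⟨htl, htu⟩
  have ht0 : (0 : ℝ) < t := lt_of_lt_of_le (by linarith) htl
  have hFt : cdf μ x₁ < t := lt_of_lt_of_le (by linarith) htl
  set q := quantile μ t with hqdef
  have hne := quantile_aux_nonempty μ htu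
  have hx₁q : x₁ ≤ q := by
    apply le_csInf hne
    intro a ha
    by_contra h
    push_neg at h
    exact absurd ha (not_le.mpr (lt_of_le_of_lt ((cdf μ).mono h.le) hFt))
  have hq1 : (1 : ℝ) ≤ q := le_trans (le_max_right _ _) hx₁q
  have hqx₀ : x₀ ≤ q := le_trans (le_max_left _ _) hx₁q
  have hmem : t ≤ cdf μ q := le_cdf_quantile μ ht0 htu
  have htail := hx₀ q hqx₀
  have hGc : t ≤ cdf σ (c * q) := by
    rw [hGσ (c * q)] at htail
    rw [hSμ q] at htail
    linarith
  have hquant : quantile σ t ≤ c * q := csInf_le (quantile_aux_bddBelow σ ht0) hGc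
  have hν : quantile (Measure.map D₂ P) t = q := by rw [← hid]
  rw [hν]
  calc quantile σ t ≤ c * q := hquant
    _ < 2 * q := by
        have : (0:ℝ) < q := by linarith
        exact mul_lt_mul_of_pos_right hc2 this
    _ = q + q := by ring
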